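/- Let 0 < ε < 1/2 and let W ≥ 1 be an integer. Let G = (V,E) be a weighted multigraph with m edges, integer edge weights in {1,...,W}, and capacities {b_v}, and let M_G be a maximum-weight b-matching satisfying w(M_G) ≥ (3W²/(2ε²))·log(m). Choose a uniformly random ordering of the m edges, let E^early be the set of the first ⌊εm⌋ edges and E^late the remaining edges. Then with probability at least 1 − m⁻³, the total weight of the edges of M_G lying in E^early is at most 2ε·w(M_G); in particular, with probability at least 1 − m⁻³, the subgraph E^late contains a b-matching of weight at least (1 − 2ε)·w(M_G). -/

import Mathlib

open scoped Classical

/-- A weighted multigraph edge: two endpoints and an integer weight. -/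
abbrev MEdge (V : Type*) := V × V × ℕ

variable {V : Type*}

/-- Weight of an edge. -/
def ewt (e : MEdge V) : ℕ := e.2.2

/-- Degree of a vertex in a multiset of edges: number of incident edges. -/
noncomputable def mdeg (H : Multiset (MEdge V)) (v : V) : ℕ :=
  (H.filter (fun e => e.1 = v ∨ e.2.1 = v)).card

/-- Weighted degree of a vertex in a multiset of edges. -/
noncomputable def mwdeg (H : Multiset (MEdge V)) (v : V) : ℕ :=
  ((H.filter (fun e => e.1 = v ∨ e.2.1 = v)).map ewt).sum

/-- Total weight of a multiset of edges. -/
def mwt (M : Multiset (MEdge V)) : ℕ := (M.map ewt).sum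

/-- A multiset of edges is valid (for weight bound `W`): no self-loops and
integer weights in `{1, ..., W}`. -/
def ValidEdges (W : ℕ) (E : Multiset (MEdge V)) : Prop :=
  ∀ e ∈ E, e.1 ≠ e.2.1 ∧ 1 ≤ ewt e ∧ ewt e ≤ W

/-- The multiset of parallel edges between `u` and `v`. -/
noncomputable def par (E : Multiset (MEdge V)) (u v : V) : Multiset (MEdge V) :=
  E.filter (fun e => (e.1 = u ∧ e.2.1 = v) ∨ (e.1 = v ∧ e.2.1 = u))

/-- `M` is a `b`-matching contained in the (multi-)graph `E`. -/
def IsBMatching (E M : Multiset (MEdge V)) (b : V → ℕ) : Prop :=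
  M ≤ E ∧ ∀ v, mdeg M v ≤ b v

/-- `H` is a `(β, βm)`-w-b-EDCS of the multigraph `E` with capacities `b`. -/
def IsWBEDCS (E H : Multiset (MEdge V)) (b : V → ℕ) (β βm : ℕ) : Prop :=
  H ≤ E ∧
  (∀ e ∈ H,
    (mwdeg H e.1 : ℝ) / (b e.1) + (mwdeg H e.2.1 : ℝ) / (b e.2.1) ≤ (β : ℝ) * ewt e) ∧
  (∀ e ∈ E - H,
    (βm : ℝ) * ewt e ≤ (mwdeg H e.1 : ℝ) / (b e.1) + (mwdeg H e.2.1 : ℝ) / (b e.2.1))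



section AuxiliaryLemmas

set_option maxHeartbeats 2000000

lemma pow_log_ub (q p : ℕ) (r y : ℝ) (hr : 0 < r) (hy : 0 < y) (h : r ^ q = 2 ^ p * y) :
    ((q:ℕ):ℝ) * Real.log r ≤ ((p:ℕ):ℝ) * Real.log 2 + (y - 1) := by
  have h1 : Real.log (r ^ q) = (q:ℝ) * Real.log r := by
    rw [Real.log_pow]
  have h2 : Real.log ((2:ℝ) ^ p * y) = (p:ℝ) * Real.log 2 + Real.log y := by
    rw [Real.log_mul (by positivity) hy.ne', Real.log_pow]
  have h3 := Real.log_le_sub_one_of_pos hy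
  rw [h, h2] at h1
  linarith

lemma pow_log_lb (q p : ℕ) (r y : ℝ) (hr : 0 < r) (hy : 0 < y) (h : r ^ q = 2 ^ p * y) :
    ((p:ℕ):ℝ) * Real.log 2 + (1 - y⁻¹) ≤ ((q:ℕ):ℝ) * Real.log r := by
  have h1 : Real.log (r ^ q) = (q:ℝ) * Real.log r := by
    rw [Real.log_pow]
  have h2 : Real.log ((2:ℝ) ^ p * y) = (p:ℝ) * Real.log 2 + Real.log y := by
    rw [Real.log_mul (by positivity) hy.ne', Real.log_pow]
  have h3 := Real.one_sub_inv_le_log_of_pos hy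
  rw [h, h2] at h1
  linarith

lemma lemA (ε : ℝ) (h0 : 0 < ε) (h1 : ε < 1/2) :
    ∃ ζ : ℝ, 1 ≤ ζ ∧ Real.log (1 - ε + ε * ζ) - 2 * ε * Real.log ζ + 2 * ε ^ 2 ≤ 0 := by
  rcases le_or_gt ε (3/20) with h | ha0
  · refine ⟨2, by norm_num, ?_⟩
    have hpos : (0:ℝ) < 1 - ε + ε * 2 := by linarith
    have hlog : Real.log (1 - ε + ε * 2) ≤ ε := by
      have := Real.log_le_sub_one_of_pos hpos; linarith
    have h2lo := Real.log_two_gt_d9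
    have hmul : 2*ε*(0.6931471803:ℝ) ≤ 2*ε*Real.log 2 :=
      mul_le_mul_of_nonneg_left h2lo.le (by linarith)
    nlinarith
  rcases le_or_gt ε (1/5 : ℝ) with h | ha1
  · refine ⟨(5/2 : ℝ), by norm_num, ?_⟩
    have hP0pos : (0:ℝ) < (101/80 : ℝ) := by norm_num
    have hpos : (0:ℝ) < 1 - ε + ε * (5/2 : ℝ) := by nlinarith
    have hub : ((3:ℕ):ℝ) * Real.log (101/80 : ℝ) ≤ ((1:ℕ):ℝ) * Real.log 2 + ((1030301/1024000 : ℝ) - 1) :=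
      pow_log_ub 3 1 (101/80 : ℝ) (1030301/1024000 : ℝ) hP0pos (by norm_num) (by norm_num)
    have hlb : ((4:ℕ):ℝ) * Real.log 2 + (1 - ((125/128 : ℝ))⁻¹) ≤ ((3:ℕ):ℝ) * Real.log (5/2 : ℝ) :=
      pow_log_lb 3 4 (5/2 : ℝ) (125/128 : ℝ) (by norm_num) (by norm_num) (by norm_num)
    have hpub : Real.log (101/80 : ℝ) ≤ (18648013363/80000000000 : ℝ) := by
      have := Real.log_two_lt_d9; push_cast at hub; nlinarith
    have hzlb : (2290490601/2500000000 : ℝ) ≤ Real.log (5/2 : ℝ) := by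
      have := Real.log_two_gt_d9; push_cast at hlb; nlinarith
    have htan0 := Real.log_le_sub_one_of_pos (show (0:ℝ) < (1 - ε + ε * (5/2 : ℝ))/(101/80 : ℝ) by positivity)
    rw [Real.log_div hpos.ne' hP0pos.ne'] at htan0
    have hmul : 2*ε*(2290490601/2500000000 : ℝ) ≤ 2*ε*Real.log (5/2 : ℝ) :=
      mul_le_mul_of_nonneg_left hzlb (by linarith)
    nlinarith [mul_nonneg (show (0:ℝ) ≤ ε - (3/20 : ℝ) by linarith) (show (0:ℝ) ≤ (1/5 : ℝ) - ε by linarith)]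
  rcases le_or_gt ε (1/4 : ℝ) with h | ha2
  · refine ⟨(14/5 : ℝ), by norm_num, ?_⟩
    have hP0pos : (0:ℝ) < (281/200 : ℝ) := by norm_num
    have hpos : (0:ℝ) < 1 - ε + ε * (14/5 : ℝ) := by nlinarith
    have hub : ((2:ℕ):ℝ) * Real.log (281/200 : ℝ) ≤ ((1:ℕ):ℝ) * Real.log 2 + ((78961/80000 : ℝ) - 1) :=
      pow_log_ub 2 1 (281/200 : ℝ) (78961/80000 : ℝ) hP0pos (by norm_num) (by norm_num)
    have hlb : ((3:ℕ):ℝ) * Real.log 2 + (1 - ((49/50 : ℝ))⁻¹) ≤ ((2:ℕ):ℝ) * Real.log (14/5 : ℝ) :=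
      pow_log_lb 2 3 (14/5 : ℝ) (49/50 : ℝ) (by norm_num) (by norm_num) (by norm_num)
    have hpub : Real.log (281/200 : ℝ) ≤ (850199601/2500000000 : ℝ) := by
      have := Real.log_two_lt_d9; push_cast at hub; nlinarith
    have hzlb : (1008926355041/980000000000 : ℝ) ≤ Real.log (14/5 : ℝ) := by
      have := Real.log_two_gt_d9; push_cast at hlb; nlinarith
    have htan0 := Real.log_le_sub_one_of_pos (show (0:ℝ) < (1 - ε + ε * (14/5 : ℝ))/(281/200 : ℝ) by positivity)
    rw [Real.log_div hpos.ne' hP0pos.ne'] at htan0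
    have hmul : 2*ε*(1008926355041/980000000000 : ℝ) ≤ 2*ε*Real.log (14/5 : ℝ) :=
      mul_le_mul_of_nonneg_left hzlb (by linarith)
    nlinarith [mul_nonneg (show (0:ℝ) ≤ ε - (1/5 : ℝ) by linarith) (show (0:ℝ) ≤ (1/4 : ℝ) - ε by linarith)]
  rcases le_or_gt ε (3/10 : ℝ) with h | ha3
  · refine ⟨(16/5 : ℝ), by norm_num, ?_⟩
    have hP0pos : (0:ℝ) < (321/200 : ℝ) := by norm_num
    have hpos : (0:ℝ) < 1 - ε + ε * (16/5 : ℝ) := by nlinarith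
    have hub : ((3:ℕ):ℝ) * Real.log (321/200 : ℝ) ≤ ((2:ℕ):ℝ) * Real.log 2 + ((33076161/32000000 : ℝ) - 1) :=
      pow_log_ub 3 2 (321/200 : ℝ) (33076161/32000000 : ℝ) hP0pos (by norm_num) (by norm_num)
    have hlb : ((5:ℕ):ℝ) * Real.log 2 + (1 - ((128/125 : ℝ))⁻¹) ≤ ((3:ℕ):ℝ) * Real.log (16/5 : ℝ) :=
      pow_log_lb 3 5 (16/5 : ℝ) (128/125 : ℝ) (by norm_num) (by norm_num) (by norm_num)
    have hpub : Real.log (321/200 : ℝ) ≤ (9466162619/20000000000 : ℝ) := by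
      have := Real.log_two_lt_d9; push_cast at hub; nlinarith
    have hzlb : (2326115601/2000000000 : ℝ) ≤ Real.log (16/5 : ℝ) := by
      have := Real.log_two_gt_d9; push_cast at hlb; nlinarith
    have htan0 := Real.log_le_sub_one_of_pos (show (0:ℝ) < (1 - ε + ε * (16/5 : ℝ))/(321/200 : ℝ) by positivity)
    rw [Real.log_div hpos.ne' hP0pos.ne'] at htan0
    have hmul : 2*ε*(2326115601/2000000000 : ℝ) ≤ 2*ε*Real.log (16/5 : ℝ) :=
      mul_le_mul_of_nonneg_left hzlb (by linarith)
    nlinarith [mul_nonneg (show (0:ℝ) ≤ ε - (1/4 : ℝ) by linarith) (show (0:ℝ) ≤ (3/10 : ℝ) - ε by linarith)]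
  rcases le_or_gt ε (7/20 : ℝ) with h | ha4
  · refine ⟨(4 : ℝ), by norm_num, ?_⟩
    have hP0pos : (0:ℝ) < (79/40 : ℝ) := by norm_num
    have hpos : (0:ℝ) < 1 - ε + ε * (4 : ℝ) := by nlinarith
    have hub : ((1:ℕ):ℝ) * Real.log (79/40 : ℝ) ≤ ((1:ℕ):ℝ) * Real.log 2 + ((79/80 : ℝ) - 1) :=
      pow_log_ub 1 1 (79/40 : ℝ) (79/80 : ℝ) hP0pos (by norm_num) (by norm_num)
    have hlb : ((2:ℕ):ℝ) * Real.log 2 + (1 - ((1 : ℝ))⁻¹) ≤ ((1:ℕ):ℝ) * Real.log (4 : ℝ) :=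
      pow_log_lb 1 2 (4 : ℝ) (1 : ℝ) (by norm_num) (by norm_num) (by norm_num)
    have hpub : Real.log (79/40 : ℝ) ≤ (53175561/78125000 : ℝ) := by
      have := Real.log_two_lt_d9; push_cast at hub; nlinarith
    have hzlb : (6931471803/5000000000 : ℝ) ≤ Real.log (4 : ℝ) := by
      have := Real.log_two_gt_d9; push_cast at hlb; nlinarith
    have htan0 := Real.log_le_sub_one_of_pos (show (0:ℝ) < (1 - ε + ε * (4 : ℝ))/(79/40 : ℝ) by positivity)
    rw [Real.log_div hpos.ne' hP0pos.ne'] at htan0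
    have hmul : 2*ε*(6931471803/5000000000 : ℝ) ≤ 2*ε*Real.log (4 : ℝ) :=
      mul_le_mul_of_nonneg_left hzlb (by linarith)
    nlinarith [mul_nonneg (show (0:ℝ) ≤ ε - (3/10 : ℝ) by linarith) (show (0:ℝ) ≤ (7/20 : ℝ) - ε by linarith)]
  rcases le_or_gt ε (2/5 : ℝ) with h | ha5
  · refine ⟨(5 : ℝ), by norm_num, ?_⟩
    have hP0pos : (0:ℝ) < (5/2 : ℝ) := by norm_num
    have hpos : (0:ℝ) < 1 - ε + ε * (5 : ℝ) := by nlinarith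
    have hub : ((3:ℕ):ℝ) * Real.log (5/2 : ℝ) ≤ ((4:ℕ):ℝ) * Real.log 2 + ((125/128 : ℝ) - 1) :=
      pow_log_ub 3 4 (5/2 : ℝ) (125/128 : ℝ) hP0pos (by norm_num) (by norm_num)
    have hlb : ((7:ℕ):ℝ) * Real.log 2 + (1 - ((125/128 : ℝ))⁻¹) ≤ ((3:ℕ):ℝ) * Real.log (5 : ℝ) :=
      pow_log_lb 3 7 (5 : ℝ) (125/128 : ℝ) (by norm_num) (by norm_num) (by norm_num)
    have hpub : Real.log (5/2 : ℝ) ≤ (3436439029/3750000000 : ℝ) := by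
      have := Real.log_two_lt_d9; push_cast at hub; nlinarith
    have hzlb : (16093434207/10000000000 : ℝ) ≤ Real.log (5 : ℝ) := by
      have := Real.log_two_gt_d9; push_cast at hlb; nlinarith
    have htan0 := Real.log_le_sub_one_of_pos (show (0:ℝ) < (1 - ε + ε * (5 : ℝ))/(5/2 : ℝ) by positivity)
    rw [Real.log_div hpos.ne' hP0pos.ne'] at htan0
    have hmul : 2*ε*(16093434207/10000000000 : ℝ) ≤ 2*ε*Real.log (5 : ℝ) :=
      mul_le_mul_of_nonneg_left hzlb (by linarith)
    nlinarith [mul_nonneg (show (0:ℝ) ≤ ε - (7/20 : ℝ) by linarith) (show (0:ℝ) ≤ (2/5 : ℝ) - ε by linarith)]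
  rcases le_or_gt ε (9/20 : ℝ) with h | ha6
  · refine ⟨(15/2 : ℝ), by norm_num, ?_⟩
    have hP0pos : (0:ℝ) < (301/80 : ℝ) := by norm_num
    have hpos : (0:ℝ) < 1 - ε + ε * (15/2 : ℝ) := by nlinarith
    have hub : ((1:ℕ):ℝ) * Real.log (301/80 : ℝ) ≤ ((2:ℕ):ℝ) * Real.log 2 + ((301/320 : ℝ) - 1) :=
      pow_log_ub 1 2 (301/80 : ℝ) (301/320 : ℝ) hP0pos (by norm_num) (by norm_num)
    have hlb : ((3:ℕ):ℝ) * Real.log 2 + (1 - ((15/16 : ℝ))⁻¹) ≤ ((1:ℕ):ℝ) * Real.log (15/2 : ℝ) :=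
      pow_log_lb 1 3 (15/2 : ℝ) (15/16 : ℝ) (by norm_num) (by norm_num) (by norm_num)
    have hpub : Real.log (301/80 : ℝ) ≤ (829324601/625000000 : ℝ) := by
      have := Real.log_two_lt_d9; push_cast at hub; nlinarith
    have hzlb : (60383246227/30000000000 : ℝ) ≤ Real.log (15/2 : ℝ) := by
      have := Real.log_two_gt_d9; push_cast at hlb; nlinarith
    have htan0 := Real.log_le_sub_one_of_pos (show (0:ℝ) < (1 - ε + ε * (15/2 : ℝ))/(301/80 : ℝ) by positivity)
    rw [Real.log_div hpos.ne' hP0pos.ne'] at htan0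
    have hmul : 2*ε*(60383246227/30000000000 : ℝ) ≤ 2*ε*Real.log (15/2 : ℝ) :=
      mul_le_mul_of_nonneg_left hzlb (by linarith)
    nlinarith [mul_nonneg (show (0:ℝ) ≤ ε - (2/5 : ℝ) by linarith) (show (0:ℝ) ≤ (9/20 : ℝ) - ε by linarith)]
  · refine ⟨(20 : ℝ), by norm_num, ?_⟩
    have hP0pos : (0:ℝ) < (401/40 : ℝ) := by norm_num
    have hpos : (0:ℝ) < 1 - ε + ε * (20 : ℝ) := by nlinarith
    have hub : ((3:ℕ):ℝ) * Real.log (401/40 : ℝ) ≤ ((10:ℕ):ℝ) * Real.log 2 + ((64481201/65536000 : ℝ) - 1) :=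
      pow_log_ub 3 10 (401/40 : ℝ) (64481201/65536000 : ℝ) hP0pos (by norm_num) (by norm_num)
    have hlb : ((13:ℕ):ℝ) * Real.log 2 + (1 - ((125/128 : ℝ))⁻¹) ≤ ((3:ℕ):ℝ) * Real.log (20 : ℝ) :=
      pow_log_lb 3 13 (20 : ℝ) (125/128 : ℝ) (by norm_num) (by norm_num) (by norm_num)
    have hpub : Real.log (401/40 : ℝ) ≤ (2360448632339/1024000000000 : ℝ) := by
      have := Real.log_two_lt_d9; push_cast at hub; nlinarith
    have hzlb : (29956377813/10000000000 : ℝ) ≤ Real.log (20 : ℝ) := by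
      have := Real.log_two_gt_d9; push_cast at hlb; nlinarith
    have htan0 := Real.log_le_sub_one_of_pos (show (0:ℝ) < (1 - ε + ε * (20 : ℝ))/(401/40 : ℝ) by positivity)
    rw [Real.log_div hpos.ne' hP0pos.ne'] at htan0
    have hmul : 2*ε*(29956377813/10000000000 : ℝ) ≤ 2*ε*Real.log (20 : ℝ) :=
      mul_le_mul_of_nonneg_left hzlb (by linarith)
    nlinarith [mul_nonneg (show (0:ℝ) ≤ ε - (9/20 : ℝ) by linarith) (show (0:ℝ) ≤ (1/2 : ℝ) - ε by linarith)]

lemma two_point_holder {ε ζ s : ℝ} (hε0 : 0 < ε) (hε1 : ε < 1) (hζ : 1 ≤ ζ)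
    (hs0 : 0 ≤ s) (hs1 : s ≤ 1) :
    1 - ε + ε * ζ ^ s ≤ (1 - ε + ε * ζ) ^ s := by
  have h1ε : 0 < 1 - ε := by linarith
  have hζ0 : (0:ℝ) < ζ := by linarith
  have hP : 0 < 1 - ε + ε * ζ := by nlinarith
  set P := 1 - ε + ε * ζ with hPdef
  have hPs : 0 < P ^ s := Real.rpow_pos_of_pos hP s
  have hg1 := Real.geom_mean_le_arith_mean2_weighted hs0 (by linarith : (0:ℝ) ≤ 1 - s)
      (show (0:ℝ) ≤ (1-ε)/P by positivity) h1ε.le (by ring)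
  have hg2 := Real.geom_mean_le_arith_mean2_weighted hs0 (by linarith : (0:ℝ) ≤ 1 - s)
      (show (0:ℝ) ≤ (ε*ζ)/P by positivity) hε0.le (by ring)
  have eq1 : ((1-ε)/P)^s * (1-ε)^(1-s) = (1-ε) / P^s := by
    rw [Real.div_rpow h1ε.le hP.le]
    rw [div_mul_eq_mul_div, ← Real.rpow_add h1ε]
    norm_num
  have eq2 : ((ε*ζ)/P)^s * ε^(1-s) = ε * ζ^s / P^s := by
    rw [Real.div_rpow (by positivity) hP.le, Real.mul_rpow hε0.le hζ0.le]
    have h3 : ε ^ s * ζ ^ s / P ^ s * ε ^ (1-s) = (ε ^ s * ε ^ (1-s)) * ζ ^ s / P ^ s := by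
      ring
    rw [h3, ← Real.rpow_add hε0]
    norm_num
  have hfin : s*((1-ε)/P) + (1-s)*(1-ε) + (s*((ε*ζ)/P) + (1-s)*ε) = 1 := by
    field_simp
    ring
  rw [eq1] at hg1
  rw [eq2] at hg2
  have hsum : (1-ε)/P^s + ε*ζ^s/P^s ≤ 1 := by linarith
  have := mul_le_mul_of_nonneg_right hsum hPs.le
  have hexp : ((1-ε)/P^s + ε*ζ^s/P^s) * P^s = 1 - ε + ε * ζ^s := by
    field_simp
  rw [hexp, one_mul] at this
  exact this

lemma edge_log_bound {ε ζ : ℝ} (hε0 : 0 < ε) (hε1 : ε < 1) (hζ : 1 ≤ ζ) {W x : ℕ}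
    (hW : 1 ≤ W) (hx1 : 1 ≤ x) (hxW : x ≤ W) :
    Real.log (1 + ε * ((ζ ^ ((W:ℝ)⁻¹)) ^ (x:ℕ) - 1)) ≤
      ((x:ℝ)/W) * Real.log (1 - ε + ε*ζ) := by
  have hζ0 : (0:ℝ) < ζ := by linarith
  have hW0 : (0:ℝ) < (W:ℝ) := by exact_mod_cast hW
  set s : ℝ := (x:ℝ)/W with hs
  have hs0 : 0 ≤ s := by positivity
  have hs1 : s ≤ 1 := by
    rw [hs, div_le_one hW0]; exact_mod_cast hxW
  have hzx : (ζ ^ ((W:ℝ)⁻¹)) ^ (x:ℕ) = ζ ^ s := by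
    rw [← Real.rpow_natCast (ζ ^ ((W:ℝ)⁻¹)) x, ← Real.rpow_mul hζ0.le, hs]
    ring_nf
  rw [hzx]
  have h2 : 1 + ε * (ζ ^ s - 1) = 1 - ε + ε * ζ ^ s := by ring
  rw [h2]
  have hP : 0 < 1 - ε + ε * ζ := by nlinarith
  have hLhs : 0 < 1 - ε + ε * ζ ^ s := by
    have := Real.rpow_pos_of_pos hζ0 s
    nlinarith
  calc Real.log (1 - ε + ε * ζ ^ s) ≤ Real.log ((1 - ε + ε * ζ) ^ s) :=
        Real.log_le_log hLhs (two_point_holder hε0 hε1 hζ hs0 hs1)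
    _ = s * Real.log (1 - ε + ε * ζ) := Real.log_rpow hP s

-- number of S-subsets of `univ : Finset (Fin m)` containing a fixed R
lemma count_supersets {m : ℕ} (S : ℕ) (R : Finset (Fin m)) (hRS : R.card ≤ S) :
    ((Finset.powersetCard S (Finset.univ : Finset (Fin m))).filter (fun U => R ⊆ U)).card
      = Nat.choose (m - R.card) (S - R.card) := by
  have hcard : (Finset.univ \ R : Finset (Fin m)).card = m - R.card := by
    rw [Finset.card_sdiff_of_subset (Finset.subset_univ R), Finset.card_univ, Fintype.card_fin]
  rw [← hcard, ← Finset.card_powersetCard (S - R.card) (Finset.univ \ R)]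
  apply Finset.card_bij' (fun U _ => U \ R) (fun V _ => V ∪ R)
  · intro U hU
    simp only [Finset.mem_filter, Finset.mem_powersetCard] at hU
    obtain ⟨⟨_, hUcard⟩, hRU⟩ := hU
    rw [Finset.mem_powersetCard]
    constructor
    · exact Finset.sdiff_subset_sdiff (Finset.subset_univ U) (le_refl R)
    · rw [Finset.card_sdiff_of_subset hRU, hUcard]
  · intro V hV
    rw [Finset.mem_powersetCard] at hV
    obtain ⟨hVsub, hVcard⟩ := hV
    have hdisj : Disjoint V R := by
      apply Finset.disjoint_left.mpr
      intro a haV haR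
      have := hVsub haV
      simp [Finset.mem_sdiff] at this
      exact this haR
    simp only [Finset.mem_filter, Finset.mem_powersetCard]
    refine ⟨⟨Finset.subset_univ _, ?_⟩, Finset.subset_union_right⟩
    rw [Finset.card_union_of_disjoint hdisj, hVcard]
    omega
  · intro U hU
    simp only [Finset.mem_filter] at hU
    exact Finset.sdiff_union_of_subset hU.2
  · intro V hV
    rw [Finset.mem_powersetCard] at hV
    apply Finset.union_sdiff_cancel_right
    apply Finset.disjoint_left.mpr
    intro a haV haR
    have := hV.1 haV
    simp [Finset.mem_sdiff] at this
    exact this haR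

lemma choose_desc_identity : ∀ (k S' m : ℕ), k ≤ S' → S' ≤ m →
    Nat.choose m S' * S'.descFactorial k = m.descFactorial k * Nat.choose (m - k) (S' - k) := by
  intro k
  induction k with
  | zero => intro S' m _ _; simp
  | succ k ih =>
    intro S' m hk hSm
    have hk' : k ≤ S' := by omega
    have habs : (S' - k) * Nat.choose (m - k) (S' - k) = (m - k) * Nat.choose (m - k - 1) (S' - k - 1) := by
      obtain ⟨a, ha⟩ : ∃ a, m - k = a + 1 := ⟨m - k - 1, by omega⟩
      obtain ⟨b, hb⟩ : ∃ b, S' - k = b + 1 := ⟨S' - k - 1, by omega⟩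
      rw [ha, hb]
      have := Nat.add_one_mul_choose_eq a b
      have hab : b ≤ a := by omega
      calc (b+1) * Nat.choose (a+1) (b+1) = Nat.choose (a+1) (b+1) * (b+1) := by ring
        _ = (a+1) * Nat.choose a b := this.symm
        _ = (a+1) * Nat.choose (a+1-1) (b+1-1) := by simp
    calc Nat.choose m S' * S'.descFactorial (k+1)
        = (S' - k) * (Nat.choose m S' * S'.descFactorial k) := by
          rw [Nat.descFactorial_succ]; ring
      _ = (S' - k) * (m.descFactorial k * Nat.choose (m - k) (S' - k)) := by rw [ih S' m hk' hSm]
      _ = m.descFactorial k * ((S' - k) * Nat.choose (m - k) (S' - k)) := by ring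
      _ = m.descFactorial k * ((m - k) * Nat.choose (m - k - 1) (S' - k - 1)) := by rw [habs]
      _ = m.descFactorial (k+1) * Nat.choose (m - (k+1)) (S' - (k+1)) := by
          rw [Nat.descFactorial_succ]
          have h1 : m - k - 1 = m - (k+1) := by omega
          have h2 : S' - k - 1 = S' - (k+1) := by omega
          rw [h1, h2]; ring

lemma desc_le_eps {ε : ℝ} (hε0 : 0 ≤ ε) (hε1 : ε ≤ 1) (S' m : ℕ) (hSm : (S':ℝ) ≤ ε * m) :
    ∀ k, (S'.descFactorial k : ℝ) ≤ ε ^ k * (m.descFactorial k) := by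
  have hS'm : S' ≤ m := by
    by_contra h
    push_neg at h
    have : (m:ℝ) < (S':ℝ) := by exact_mod_cast h
    nlinarith [show (0:ℝ) ≤ (m:ℝ) from Nat.cast_nonneg m]
  intro k
  induction k with
  | zero => simp
  | succ k ih =>
    rw [Nat.descFactorial_succ, Nat.descFactorial_succ]
    push_cast
    rcases le_or_gt S' k with h | h
    · have : S' - k = 0 := by omega
      rw [this]
      push_cast
      have hnn : (0:ℝ) ≤ ε ^ (k+1) * (((m - k : ℕ):ℝ) * m.descFactorial k) := by positivity
      simpa using hnn
    · have hkm : k < m := by omega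
      have hc1 : ((S' - k : ℕ):ℝ) = (S':ℝ) - k := by
        rw [Nat.cast_sub (by omega)]
      have hc2 : ((m - k : ℕ):ℝ) = (m:ℝ) - k := by
        rw [Nat.cast_sub (by omega)]
      rw [hc1, hc2]
      have hstep : (S':ℝ) - k ≤ ε * ((m:ℝ) - k) := by nlinarith
      have h1 : (0:ℝ) ≤ (S':ℝ) - k := by
        have : (k:ℝ) < S' := by exact_mod_cast h
        linarith
      have h2 : (0:ℝ) ≤ (S'.descFactorial k : ℝ) := by positivity
      have h3 : (0:ℝ) ≤ ε * ((m:ℝ) - k) := by linarith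
      calc ((S':ℝ) - k) * (S'.descFactorial k : ℝ) ≤ (ε * ((m:ℝ) - k)) * (ε ^ k * (m.descFactorial k)) := by
            apply mul_le_mul hstep ih h2 h3
        _ = ε ^ (k+1) * (((m:ℝ) - k) * (m.descFactorial k)) := by ring

-- there is a permutation carrying U to V when cards agree
lemma exists_perm_image {m : ℕ} (U V : Finset (Fin m)) (h : U.card = V.card) :
    ∃ π : Equiv.Perm (Fin m), ∀ x, x ∈ U ↔ π x ∈ V := by
  have h1 : Fintype.card {x : Fin m // x ∈ U} = Fintype.card {x : Fin m // x ∈ V} := by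
    simp only [Fintype.card_coe, h]
  have h2 : Fintype.card {x : Fin m // ¬ x ∈ U} = Fintype.card {x : Fin m // ¬ x ∈ V} := by
    rw [Fintype.card_subtype_compl, Fintype.card_subtype_compl, Fintype.card_coe,
      Fintype.card_coe, h]
  obtain ⟨e⟩ := Fintype.card_eq.mp h1
  obtain ⟨f⟩ := Fintype.card_eq.mp h2
  refine ⟨(Equiv.sumCompl (· ∈ U)).symm.trans ((e.sumCongr f).trans (Equiv.sumCompl (· ∈ V))), ?_⟩
  intro x
  by_cases hx : x ∈ U
  · simp only [Equiv.trans_apply]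
    rw [Equiv.sumCompl_symm_apply_of_pos (p := (· ∈ U)) hx]
    simp only [Equiv.sumCongr_apply, Sum.map_inl, Equiv.sumCompl_apply_inl]
    exact ⟨fun _ => (e ⟨x, hx⟩).2, fun _ => hx⟩
  · simp only [Equiv.trans_apply]
    rw [Equiv.sumCompl_symm_apply_of_neg (p := (· ∈ U)) hx]
    simp only [Equiv.sumCongr_apply, Sum.map_inr, Equiv.sumCompl_apply_inr]
    exact ⟨fun hxx => absurd hxx hx, fun hc => absurd (f ⟨x, hx⟩).2 (not_not.mpr hc)⟩

lemma fiber_card_eq {m : ℕ} (T₀ U V : Finset (Fin m)) (h : U.card = V.card) :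
    (Finset.univ.filter (fun σ : Equiv.Perm (Fin m) => Finset.image (⇑σ.symm) T₀ = U)).card =
      (Finset.univ.filter (fun σ : Equiv.Perm (Fin m) => Finset.image (⇑σ.symm) T₀ = V)).card := by
  obtain ⟨π, hπ⟩ := exists_perm_image U V h
  have hUV : Finset.image (⇑π) U = V := by
    apply Finset.eq_of_subset_of_card_le
    · intro y hy
      obtain ⟨x, hx, rfl⟩ := Finset.mem_image.mp hy
      exact (hπ x).mp hx
    · rw [Finset.card_image_of_injective U π.injective, h]
  have hVU : Finset.image (⇑π.symm) V = U := by
    rw [← hUV, Finset.image_image]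
    have : (⇑π.symm ∘ ⇑π) = id := by
      funext x; simp
    rw [this, Finset.image_id]
  apply Finset.card_bij' (fun σ _ => π.symm.trans σ) (fun σ _ => π.trans σ)
  · intro σ hσ
    simp only [Finset.mem_filter, Finset.mem_univ, true_and] at hσ ⊢
    rw [show (π.symm.trans σ).symm = σ.symm.trans π by rfl]
    have : Finset.image (⇑(σ.symm.trans π)) T₀ = Finset.image (⇑π) (Finset.image (⇑σ.symm) T₀) := by
      rw [Finset.image_image]; rfl
    rw [this, hσ, hUV]
  · intro σ hσ
    simp only [Finset.mem_filter, Finset.mem_univ, true_and] at hσ ⊢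
    rw [show (π.trans σ).symm = σ.symm.trans π.symm by rfl]
    have : Finset.image (⇑(σ.symm.trans π.symm)) T₀ = Finset.image (⇑π.symm) (Finset.image (⇑σ.symm) T₀) := by
      rw [Finset.image_image]; rfl
    rw [this, hσ, hVU]
  · intro σ _; ext x; simp
  · intro σ _; ext x; simp

-- the count bound for subsets, real-valued
lemma count_supersets_le {m : ℕ} {ε : ℝ} (hε0 : 0 ≤ ε) (hε1 : ε ≤ 1) (S' : ℕ)
    (hSm : (S':ℝ) ≤ ε * m) (hS'm : S' ≤ m) (R : Finset (Fin m)) :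
    (((Finset.powersetCard S' (Finset.univ : Finset (Fin m))).filter (fun U => R ⊆ U)).card : ℝ)
      ≤ ε ^ R.card * (Nat.choose m S' : ℝ) := by
  rcases le_or_gt R.card S' with hk | hk
  · rw [count_supersets S' R hk]
    have hid := choose_desc_identity R.card S' m hk hS'm
    have hdesc := desc_le_eps hε0 hε1 S' m hSm R.card
    have hpos : (0:ℝ) < (m.descFactorial R.card : ℝ) := by
      have hkm : R.card ≤ m := le_trans hk hS'm
      have : 0 < m.descFactorial R.card := by
        apply Nat.pos_of_ne_zero
        intro h0
        have := Nat.descFactorial_eq_zero_iff_lt.mp h0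
        omega
      exact_mod_cast this
    rw [← mul_le_mul_iff_of_pos_right hpos]
    have hidR : (Nat.choose m S' : ℝ) * (S'.descFactorial R.card : ℝ)
        = (m.descFactorial R.card : ℝ) * (Nat.choose (m - R.card) (S' - R.card) : ℝ) := by
      exact_mod_cast congrArg (Nat.cast : ℕ → ℝ) hid
    calc (Nat.choose (m - R.card) (S' - R.card) : ℝ) * (m.descFactorial R.card : ℝ)
        = (Nat.choose m S' : ℝ) * (S'.descFactorial R.card : ℝ) := by
          rw [hidR]; ring
      _ ≤ (Nat.choose m S' : ℝ) * (ε ^ R.card * (m.descFactorial R.card : ℝ)) := by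
          apply mul_le_mul_of_nonneg_left hdesc (by positivity)
      _ = ε ^ R.card * (Nat.choose m S' : ℝ) * (m.descFactorial R.card : ℝ) := by ring
  · have hempty : ((Finset.powersetCard S' (Finset.univ : Finset (Fin m))).filter
        (fun U => R ⊆ U)) = ∅ := by
      apply Finset.filter_eq_empty_iff.mpr
      intro U hU hRU
      rw [Finset.mem_powersetCard] at hU
      have := Finset.card_le_card hRU
      omega
    rw [hempty]
    simp
    positivity

lemma comb_bound {m : ℕ} (ε : ℝ) (hε0 : 0 ≤ ε) (hε1 : ε ≤ 1) (S : ℕ) (hS : (S:ℝ) ≤ ε * m)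
    (A : Finset (Fin m)) (c : Fin m → ℝ) (hc : ∀ i, 0 ≤ c i) :
    ∑ σ : Equiv.Perm (Fin m), ∏ i ∈ A, (1 + c i * (if (σ i : ℕ) < S then 1 else 0))
      ≤ (m.factorial : ℝ) * ∏ i ∈ A, (1 + ε * c i) := by
  set T₀ : Finset (Fin m) := Finset.univ.filter (fun j : Fin m => (j:ℕ) < S) with hT₀
  set S' := T₀.card with hS'
  have hS'S : S' ≤ S := by
    rw [hS', ← Finset.card_range S]
    refine Finset.card_le_card_of_injOn (fun j => (j:ℕ)) ?_ ?_
    · intro j hj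
      simp only [Finset.mem_coe, hT₀, Finset.mem_filter] at hj
      exact Finset.mem_coe.mpr (Finset.mem_range.mpr hj.2)
    · intro a _ b _ hab
      exact Fin.val_injective hab
  have hS'm : S' ≤ m := by
    calc S' ≤ Finset.univ.card := Finset.card_le_card (Finset.filter_subset _ _)
      _ = m := by rw [Finset.card_univ, Fintype.card_fin]
  have hS'ε : (S':ℝ) ≤ ε * m := le_trans (by exact_mod_cast hS'S) hS
  set 𝒰 := Finset.powersetCard S' (Finset.univ : Finset (Fin m)) with h𝒰
  set G : Finset (Fin m) → ℝ := fun U => ∏ i ∈ A, (1 + c i * (if i ∈ U then 1 else 0)) with hG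
  have hGnn : ∀ U, 0 ≤ G U := by
    intro U
    apply Finset.prod_nonneg
    intro i _
    have := hc i
    split <;> nlinarith
  -- step 1 : rewrite each summand
  have step1 : ∀ σ : Equiv.Perm (Fin m),
      ∏ i ∈ A, (1 + c i * (if (σ i : ℕ) < S then 1 else 0)) = G (Finset.image (⇑σ.symm) T₀) := by
    intro σ
    apply Finset.prod_congr rfl
    intro i _
    have hiff : (σ i : ℕ) < S ↔ i ∈ Finset.image (⇑σ.symm) T₀ := by
      rw [Finset.mem_image]
      constructor
      · intro hlt
        exact ⟨σ i, by rw [hT₀, Finset.mem_filter]; exact ⟨Finset.mem_univ _, hlt⟩, by simp⟩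
      · rintro ⟨j, hj, rfl⟩
        rw [hT₀, Finset.mem_filter] at hj
        simpa using hj.2
    by_cases hcase : (σ i : ℕ) < S
    · rw [if_pos hcase, if_pos (hiff.mp hcase)]
    · rw [if_neg hcase, if_neg (fun hmem => hcase (hiff.mpr hmem))]
  have hmaps : ∀ σ : Equiv.Perm (Fin m), σ ∈ (Finset.univ : Finset (Equiv.Perm (Fin m))) →
      Finset.image (⇑σ.symm) T₀ ∈ 𝒰 := by
    intro σ _
    rw [h𝒰, Finset.mem_powersetCard]
    exact ⟨Finset.subset_univ _, by rw [Finset.card_image_of_injective _ σ.symm.injective]⟩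
  -- the common fiber cardinality
  set c₀ := (Finset.univ.filter
      (fun σ : Equiv.Perm (Fin m) => Finset.image (⇑σ.symm) T₀ = T₀)).card with hc₀
  have hfib : ∀ U ∈ 𝒰, (Finset.univ.filter
      (fun σ : Equiv.Perm (Fin m) => Finset.image (⇑σ.symm) T₀ = U)).card = c₀ := by
    intro U hU
    rw [h𝒰, Finset.mem_powersetCard] at hU
    rw [hc₀]
    exact fiber_card_eq T₀ U T₀ (by rw [hU.2])
  -- partition of the sum
  have step2 : ∑ σ : Equiv.Perm (Fin m), G (Finset.image (⇑σ.symm) T₀)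
      = ∑ U ∈ 𝒰, (c₀ : ℝ) * G U := by
    rw [← Finset.sum_fiberwise_of_maps_to hmaps (fun σ => G (Finset.image (⇑σ.symm) T₀))]
    apply Finset.sum_congr rfl
    intro U hU
    have : ∀ σ ∈ Finset.univ.filter
        (fun σ : Equiv.Perm (Fin m) => Finset.image (⇑σ.symm) T₀ = U),
        G (Finset.image (⇑σ.symm) T₀) = G U := by
      intro σ hσ
      rw [Finset.mem_filter] at hσ
      rw [hσ.2]
    rw [Finset.sum_congr rfl this, Finset.sum_const, hfib U hU, nsmul_eq_mul]
  -- total count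
  have step3 : (m.factorial : ℕ) = 𝒰.card * c₀ := by
    have := Finset.card_eq_sum_card_fiberwise hmaps
    rw [Finset.card_univ, Fintype.card_perm, Fintype.card_fin] at this
    rw [this, Finset.sum_congr rfl hfib, Finset.sum_const, smul_eq_mul]
  -- expansion bound over subsets
  have step4 : ∑ U ∈ 𝒰, G U ≤ (𝒰.card : ℝ) * ∏ i ∈ A, (1 + ε * c i) := by
    have hexpand : ∀ U, G U = ∑ R ∈ A.powerset,
        (if R ⊆ U then ∏ i ∈ R, c i else 0) := by
      intro U
      have hGU : G U = ∏ i ∈ A, (1 + c i * (if i ∈ U then 1 else 0)) := rfl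
      rw [hGU]
      have : ∀ i ∈ A, (1 + c i * (if i ∈ U then 1 else 0))
          = ((fun i => c i * (if i ∈ U then 1 else 0)) i + (fun _ => (1:ℝ)) i) := by
        intro i _; ring
      rw [Finset.prod_congr rfl this, Finset.prod_add]
      apply Finset.sum_congr rfl
      intro R hR
      rw [Finset.prod_const_one, mul_one]
      by_cases hRU : R ⊆ U
      · rw [if_pos hRU]
        apply Finset.prod_congr rfl
        intro i hi
        rw [if_pos (hRU hi), mul_one]
      · rw [if_neg hRU]
        obtain ⟨i, hiR, hiU⟩ := Finset.not_subset.mp hRU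
        apply Finset.prod_eq_zero hiR
        rw [if_neg hiU, mul_zero]
    calc ∑ U ∈ 𝒰, G U
        = ∑ R ∈ A.powerset, ∑ U ∈ 𝒰, (if R ⊆ U then ∏ i ∈ R, c i else 0) := by
          rw [Finset.sum_congr rfl (fun U _ => hexpand U), Finset.sum_comm]
      _ = ∑ R ∈ A.powerset, ((𝒰.filter (fun U => R ⊆ U)).card : ℝ) * ∏ i ∈ R, c i := by
          apply Finset.sum_congr rfl
          intro R _
          rw [← Finset.sum_filter, Finset.sum_const, nsmul_eq_mul]
      _ ≤ ∑ R ∈ A.powerset, ε ^ R.card * (𝒰.card : ℝ) * ∏ i ∈ R, c i := by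
          apply Finset.sum_le_sum
          intro R _
          have hcnt := count_supersets_le hε0 hε1 S' hS'ε hS'm R
          have hprodnn : (0:ℝ) ≤ ∏ i ∈ R, c i := Finset.prod_nonneg (fun i _ => hc i)
          have h𝒰card : 𝒰.card = Nat.choose m S' := by
            rw [h𝒰, Finset.card_powersetCard, Finset.card_univ, Fintype.card_fin]
          rw [h𝒰card]
          apply mul_le_mul_of_nonneg_right _ hprodnn
          exact hcnt
      _ = (𝒰.card : ℝ) * ∑ R ∈ A.powerset, (∏ i ∈ R, ε * c i) * ∏ i ∈ A \ R, (1:ℝ) := by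
          rw [Finset.mul_sum]
          apply Finset.sum_congr rfl
          intro R _
          rw [Finset.prod_const_one, mul_one, Finset.prod_mul_distrib, Finset.prod_const]
          ring
      _ = (𝒰.card : ℝ) * ∏ i ∈ A, (1 + ε * c i) := by
          rw [← Finset.prod_add]
          congr 1
          apply Finset.prod_congr rfl
          intro i _
          ring
  -- combine
  calc ∑ σ : Equiv.Perm (Fin m), ∏ i ∈ A, (1 + c i * (if (σ i : ℕ) < S then 1 else 0))
      = ∑ σ : Equiv.Perm (Fin m), G (Finset.image (⇑σ.symm) T₀) := by
        apply Finset.sum_congr rfl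
        intro σ _
        exact step1 σ
    _ = (c₀:ℝ) * ∑ U ∈ 𝒰, G U := by
        rw [step2, Finset.mul_sum]
    _ ≤ (c₀:ℝ) * ((𝒰.card : ℝ) * ∏ i ∈ A, (1 + ε * c i)) := by
        apply mul_le_mul_of_nonneg_left step4 (by positivity)
    _ = (m.factorial : ℝ) * ∏ i ∈ A, (1 + ε * c i) := by
        have : (m.factorial : ℝ) = (𝒰.card : ℝ) * (c₀ : ℝ) := by
          exact_mod_cast congrArg (Nat.cast : ℕ → ℝ) step3
        rw [this]; ring

lemma bad_count {m W : ℕ} (hW : 1 ≤ W) (hm : 1 ≤ m) {ε : ℝ} (hε0 : 0 < ε) (hε1 : ε < 1/2)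
    (A : Finset (Fin m)) (w : Fin m → ℕ) (hw1 : ∀ i ∈ A, 1 ≤ w i) (hwW : ∀ i ∈ A, w i ≤ W)
    (hbig : 3*(W:ℝ)^2/(2*ε^2) * Real.log m ≤ ((∑ i ∈ A, w i : ℕ) : ℝ)) :
    ((Finset.univ.filter (fun σ : Equiv.Perm (Fin m) =>
        2*ε*((∑ i ∈ A, w i : ℕ) : ℝ) <
          ∑ i ∈ A.filter (fun i => (σ i:ℕ) < Nat.floor (ε*(m:ℝ))), ((w i : ℕ) : ℝ))).card : ℝ)
      ≤ (m.factorial : ℝ) * (((m:ℝ)^3)⁻¹) := by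
  obtain ⟨ζ, hζ1, hζkey⟩ := lemA ε hε0 hε1
  have hζ0 : (0:ℝ) < ζ := lt_of_lt_of_le one_pos hζ1
  have hW0 : (0:ℝ) < (W:ℝ) := by exact_mod_cast hW
  have hm0 : (0:ℝ) < (m:ℝ) := by exact_mod_cast hm
  set wS : ℕ := ∑ i ∈ A, w i with hwS
  set z : ℝ := ζ ^ ((W:ℝ)⁻¹) with hzdef
  have hz1 : 1 ≤ z := Real.one_le_rpow hζ1 (by positivity)
  have hz0 : (0:ℝ) < z := lt_of_lt_of_le one_pos hz1
  set c : Fin m → ℝ := fun i => z ^ (w i) - 1 with hcdef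
  have hc : ∀ i, 0 ≤ c i := by
    intro i
    have : (1:ℝ) ≤ z ^ (w i) := one_le_pow₀ hz1
    simp only [hcdef]
    linarith
  set S : ℕ := Nat.floor (ε*(m:ℝ)) with hSdef
  have hSle : (S:ℝ) ≤ ε * m := Nat.floor_le (by positivity)
  set badset := Finset.univ.filter (fun σ : Equiv.Perm (Fin m) =>
        2*ε*((wS : ℕ) : ℝ) < ∑ i ∈ A.filter (fun i => (σ i:ℕ) < S), ((w i : ℕ) : ℝ)) with hbadset
  set X : Equiv.Perm (Fin m) → ℕ := fun σ => ∑ i ∈ A.filter (fun i => (σ i:ℕ) < S), w i with hXdef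
  -- pointwise product identity
  have hpoint : ∀ σ : Equiv.Perm (Fin m),
      z ^ (X σ) = ∏ i ∈ A, (1 + c i * (if (σ i:ℕ) < S then 1 else 0)) := by
    intro σ
    have h1 : X σ = ∑ i ∈ A, (if (σ i:ℕ) < S then w i else 0) := by
      rw [hXdef]
      exact Finset.sum_filter _ _
    rw [h1, ← Finset.prod_pow_eq_pow_sum]
    apply Finset.prod_congr rfl
    intro i _
    by_cases hcase : (σ i:ℕ) < S
    · rw [if_pos hcase, if_pos hcase]
      simp only [hcdef]
      ring
    · rw [if_neg hcase, if_neg hcase]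
      simp only [hcdef, pow_zero]
      ring
  -- lower bound for bad sigmas
  have hlow : ∀ σ ∈ badset, z ^ (2*ε*((wS:ℕ):ℝ)) ≤ z ^ (X σ) := by
    intro σ hσ
    rw [hbadset, Finset.mem_filter] at hσ
    have hXle : 2*ε*((wS:ℕ):ℝ) ≤ ((X σ : ℕ) : ℝ) := by
      have : (∑ i ∈ A.filter (fun i => (σ i:ℕ) < S), ((w i : ℕ) : ℝ)) = ((X σ : ℕ):ℝ) := by
        rw [hXdef]
        push_cast
        rfl
      rw [← this]
      exact le_of_lt hσ.2
    calc z ^ (2*ε*((wS:ℕ):ℝ)) ≤ z ^ (((X σ : ℕ)):ℝ) :=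
          Real.rpow_le_rpow_of_exponent_le hz1 hXle
      _ = z ^ (X σ) := Real.rpow_natCast z (X σ)
  -- sum bound
  have hsum1 : (badset.card : ℝ) * z ^ (2*ε*((wS:ℕ):ℝ)) ≤
      ∑ σ : Equiv.Perm (Fin m), z ^ (X σ) := by
    calc (badset.card : ℝ) * z ^ (2*ε*((wS:ℕ):ℝ)) = badset.card • z ^ (2*ε*((wS:ℕ):ℝ)) := by
          rw [nsmul_eq_mul]
      _ ≤ ∑ σ ∈ badset, z ^ (X σ) := Finset.card_nsmul_le_sum badset _ _ hlow
      _ ≤ ∑ σ : Equiv.Perm (Fin m), z ^ (X σ) := by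
          apply Finset.sum_le_sum_of_subset_of_nonneg (Finset.subset_univ _)
          intro σ _ _
          positivity
  have hsum2 : ∑ σ : Equiv.Perm (Fin m), z ^ (X σ)
      ≤ (m.factorial : ℝ) * ∏ i ∈ A, (1 + ε * c i) := by
    calc ∑ σ : Equiv.Perm (Fin m), z ^ (X σ)
        = ∑ σ : Equiv.Perm (Fin m), ∏ i ∈ A, (1 + c i * (if (σ i:ℕ) < S then 1 else 0)) := by
          apply Finset.sum_congr rfl
          intro σ _
          exact hpoint σ
      _ ≤ (m.factorial : ℝ) * ∏ i ∈ A, (1 + ε * c i) :=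
          comb_bound ε hε0.le (by linarith) S hSle A c hc
  -- analytic bound on the product
  set L : ℝ := Real.log (1 - ε + ε * ζ) with hLdef
  have hP0 : (0:ℝ) < 1 - ε + ε * ζ := by nlinarith
  have hprod_le : ∏ i ∈ A, (1 + ε * c i) ≤ Real.exp (((wS:ℕ):ℝ)/W * L) := by
    have hfac_pos : ∀ i ∈ A, (0:ℝ) < 1 + ε * c i := by
      intro i _
      have := hc i
      nlinarith
    calc ∏ i ∈ A, (1 + ε * c i) ≤ ∏ i ∈ A, Real.exp (((w i:ℝ)/W) * L) := by
          apply Finset.prod_le_prod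
          · intro i hi; exact (hfac_pos i hi).le
          · intro i hi
            rw [← Real.exp_log (hfac_pos i hi)]
            apply Real.exp_le_exp.mpr
            have := edge_log_bound hε0 (by linarith : ε < 1) hζ1 hW (hw1 i hi) (hwW i hi)
            rw [hcdef]
            simpa [hzdef, hLdef] using this
      _ = Real.exp (∑ i ∈ A, ((w i:ℝ)/W) * L) := (Real.exp_sum A _).symm
      _ = Real.exp (((wS:ℕ):ℝ)/W * L) := by
          congr 1
          have hcast : ((wS:ℕ):ℝ) = ∑ i ∈ A, ((w i:ℕ):ℝ) := by
            rw [hwS]; push_cast; rfl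
          rw [hcast, ← Finset.sum_mul, ← Finset.sum_div]
  -- exponential form of z ^ t
  have hzt : z ^ (2*ε*((wS:ℕ):ℝ)) = Real.exp (2*ε*((wS:ℕ):ℝ) * ((W:ℝ)⁻¹ * Real.log ζ)) := by
    rw [hzdef, ← Real.log_rpow hζ0 ((W:ℝ)⁻¹)] at *
    rw [Real.rpow_def_of_pos (by positivity) (2*ε*((wS:ℕ):ℝ))]
    ring_nf
  -- final exponent comparison
  have hexp_comp : Real.exp (((wS:ℕ):ℝ)/W * L) ≤
      Real.exp (2*ε*((wS:ℕ):ℝ) * ((W:ℝ)⁻¹ * Real.log ζ)) * (((m:ℝ)^3)⁻¹) := by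
    have hwsnn : (0:ℝ) ≤ ((wS:ℕ):ℝ) := Nat.cast_nonneg _
    have hlogm : (0:ℝ) ≤ Real.log m := Real.log_nonneg (by exact_mod_cast hm)
    have hbig2 : 3*(W:ℝ)^2 * Real.log m ≤ 2*ε^2 * ((wS:ℕ):ℝ) := by
      rw [div_mul_eq_mul_div, div_le_iff₀ (by positivity)] at hbig
      linarith
    have hkey2 : ((wS:ℕ):ℝ)/W * L - 2*ε*((wS:ℕ):ℝ) * ((W:ℝ)⁻¹ * Real.log ζ) ≤
        -(3 * Real.log m) := by
      have h1 : ((wS:ℕ):ℝ)/W * L - 2*ε*((wS:ℕ):ℝ) * ((W:ℝ)⁻¹ * Real.log ζ)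
          = (((wS:ℕ):ℝ)/W) * (L - 2*ε*Real.log ζ) := by
        field_simp
      rw [h1]
      have h2 : L - 2*ε*Real.log ζ ≤ -(2*ε^2) := by linarith
      have h3 : (((wS:ℕ):ℝ)/W) * (L - 2*ε*Real.log ζ) ≤ (((wS:ℕ):ℝ)/W) * (-(2*ε^2)) :=
        mul_le_mul_of_nonneg_left h2 (by positivity)
      have h4 : (((wS:ℕ):ℝ)/W) * (-(2*ε^2)) ≤ -(3*Real.log m) := by
        have hW1 : (1:ℝ) ≤ (W:ℝ) := by exact_mod_cast hW
        have h5 : 3*Real.log m * W ≤ 2*ε^2*((wS:ℕ):ℝ) := by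
          nlinarith [mul_nonneg (mul_nonneg hlogm hW0.le) (sub_nonneg.mpr hW1)]
        rw [div_mul_eq_mul_div, div_le_iff₀ hW0]
        linarith
      linarith
    have hml : ((m:ℝ)^3)⁻¹ = Real.exp (-(3*Real.log m)) := by
      rw [show -(3*Real.log (m:ℝ)) = Real.log (((m:ℝ)^3)⁻¹) by
        rw [Real.log_inv, Real.log_pow]; push_cast; ring]
      rw [Real.exp_log (by positivity)]
    rw [hml, ← Real.exp_add]
    apply Real.exp_le_exp.mpr
    linarith
  -- put everything together
  have hztpos : (0:ℝ) < z ^ (2*ε*((wS:ℕ):ℝ)) := Real.rpow_pos_of_pos hz0 _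
  have hchain : (badset.card : ℝ) * z ^ (2*ε*((wS:ℕ):ℝ)) ≤
      (m.factorial : ℝ) * (((m:ℝ)^3)⁻¹) * z ^ (2*ε*((wS:ℕ):ℝ)) := by
    calc (badset.card : ℝ) * z ^ (2*ε*((wS:ℕ):ℝ))
        ≤ (m.factorial : ℝ) * ∏ i ∈ A, (1 + ε * c i) := le_trans hsum1 hsum2
      _ ≤ (m.factorial : ℝ) * Real.exp (((wS:ℕ):ℝ)/W * L) := by
          apply mul_le_mul_of_nonneg_left hprod_le (by positivity)
      _ ≤ (m.factorial : ℝ) *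
          (Real.exp (2*ε*((wS:ℕ):ℝ) * ((W:ℝ)⁻¹ * Real.log ζ)) * (((m:ℝ)^3)⁻¹)) := by
          apply mul_le_mul_of_nonneg_left hexp_comp (by positivity)
      _ = (m.factorial : ℝ) * (((m:ℝ)^3)⁻¹) * z ^ (2*ε*((wS:ℕ):ℝ)) := by
          rw [hzt]; ring
  exact le_of_mul_le_mul_right hchain hztpos

end AuxiliaryLemmas

set_option maxHeartbeats 2000000

/-- Let `G` be a weighted multigraph with `m` edges (given as a
stream `edges : Fin m → MEdge V`), and let `M_G` (given by its index set `MI`) be a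
maximum-weight `b`-matching with `w(M_G) ≥ (3W²/(2ε²))·log m`. For a uniformly random
ordering `σ` of the edges (edge `i` arrives at position `σ i`), with probability at
least `1 - m⁻³` the weight of the edges of `M_G` among the first `⌊εm⌋` edges is at
most `2ε·w(M_G)`; in particular, with probability at least `1 - m⁻³` the remaining
(late) edges contain a `b`-matching of weight at least `(1 - 2ε)·w(M_G)`.
Probabilities are expressed by counting permutations. -/
theorem early_stream_loses_little
    {V : Type*} [Fintype V]
    (ε : ℝ) (hε0 : 0 < ε) (hε1 : ε < 1/2)
    (W : ℕ) (hW : 1 ≤ W)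
    (m : ℕ) (edges : Fin m → MEdge V)
    (hE : ValidEdges W (Multiset.map edges Finset.univ.val))
    (b : V → ℕ) (hb : ∀ v, 1 ≤ b v)
    (MI : Finset (Fin m))
    (hM : IsBMatching (Multiset.map edges Finset.univ.val) (MI.val.map edges) b)
    (hmax : ∀ M', IsBMatching (Multiset.map edges Finset.univ.val) M' b →
      mwt M' ≤ mwt (MI.val.map edges))
    (hbig : 3 * (W : ℝ)^2 / (2 * ε^2) * Real.log m ≤ (mwt (MI.val.map edges) : ℝ)) :
    (1 - ((m : ℝ)^3)⁻¹) * (Fintype.card (Equiv.Perm (Fin m))) ≤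
      ((Finset.univ.filter (fun σ : Equiv.Perm (Fin m) =>
        (∑ i ∈ MI.filter (fun i => (σ i : ℕ) < Nat.floor (ε * m)),
            (ewt (edges i) : ℝ)) ≤
          2 * ε * (mwt (MI.val.map edges) : ℝ))).card : ℝ) ∧
    (1 - ((m : ℝ)^3)⁻¹) * (Fintype.card (Equiv.Perm (Fin m))) ≤
      ((Finset.univ.filter (fun σ : Equiv.Perm (Fin m) =>
        ∃ M, IsBMatching
            (Multiset.map edges
              (Finset.univ.filter (fun i : Fin m => Nat.floor (ε * m) ≤ (σ i : ℕ))).val)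
            M b ∧
          (1 - 2 * ε) * (mwt (MI.val.map edges) : ℝ) ≤ (mwt M : ℝ))).card : ℝ) := by
  classical
  set N : ℕ := mwt (MI.val.map edges) with hN
  set S : ℕ := Nat.floor (ε * (m:ℝ)) with hSdef
  set goodset := Finset.univ.filter (fun σ : Equiv.Perm (Fin m) =>
      (∑ i ∈ MI.filter (fun i => (σ i : ℕ) < S), ((ewt (edges i) : ℕ) : ℝ)) ≤ 2 * ε * (N : ℝ))
    with hgoodset
  set eventset2 := Finset.univ.filter (fun σ : Equiv.Perm (Fin m) =>
        ∃ M, IsBMatching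
            (Multiset.map edges
              (Finset.univ.filter (fun i : Fin m => S ≤ (σ i : ℕ))).val)
            M b ∧
          (1 - 2 * ε) * (N : ℝ) ≤ (mwt M : ℝ)) with heventset2
  have hmwtgen : ∀ F : Finset (Fin m), mwt (F.val.map edges) = ∑ i ∈ F, ewt (edges i) := by
    intro F
    rw [mwt, Multiset.map_map]
    rfl
  have hwbounds : ∀ i ∈ MI, 1 ≤ ewt (edges i) ∧ ewt (edges i) ≤ W := by
    intro i _
    have hmem : edges i ∈ Multiset.map edges Finset.univ.val :=
      Multiset.mem_map.mpr ⟨i, Finset.mem_univ i, rfl⟩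
    exact ⟨(hE _ hmem).2.1, (hE _ hmem).2.2⟩
  have hNsum : N = ∑ i ∈ MI, ewt (edges i) := by rw [hN, hmwtgen]
  -- goodset is contained in the second event
  have hsub : goodset ⊆ eventset2 := by
    intro σ hσ
    rw [hgoodset, Finset.mem_filter] at hσ
    rw [heventset2, Finset.mem_filter]
    refine ⟨Finset.mem_univ σ, (MI.filter (fun i => S ≤ (σ i : ℕ))).val.map edges, ⟨?_, ?_⟩, ?_⟩
    · apply Multiset.map_le_map
      exact Finset.val_le_iff.mpr (Finset.filter_subset_filter _ (Finset.subset_univ MI))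
    · intro v
      have hle : (MI.filter (fun i => S ≤ (σ i : ℕ))).val.map edges ≤ MI.val.map edges := by
        apply Multiset.map_le_map
        exact Finset.val_le_iff.mpr (Finset.filter_subset _ _)
      calc mdeg ((MI.filter (fun i => S ≤ (σ i : ℕ))).val.map edges) v
          ≤ mdeg (MI.val.map edges) v :=
            Multiset.card_le_card (Multiset.filter_le_filter _ hle)
        _ ≤ b v := hM.2 v
    · rw [hmwtgen]
      have hfeq : MI.filter (fun i => S ≤ (σ i:ℕ)) = MI.filter (fun i => ¬ ((σ i:ℕ) < S)) :=
        Finset.filter_congr (fun i _ => by simp [not_lt])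
      have hpart : ∑ i ∈ MI.filter (fun i => (σ i : ℕ) < S), ewt (edges i)
          + ∑ i ∈ MI.filter (fun i => S ≤ (σ i : ℕ)), ewt (edges i)
            = ∑ i ∈ MI, ewt (edges i) := by
        rw [hfeq]
        exact Finset.sum_filter_add_sum_filter_not MI _ _
      have hpartR := congrArg (fun n : ℕ => (n:ℝ)) hpart
      push_cast at hpartR
      have hNsumR : (N:ℝ) = ∑ i ∈ MI, ((ewt (edges i) : ℕ):ℝ) := by
        rw [hNsum]
        push_cast
        rfl
      have hearly := hσ.2
      push_cast
      linarith
  -- main cardinality bound for the good set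
  have key1 : (1 - ((m : ℝ)^3)⁻¹) * (Fintype.card (Equiv.Perm (Fin m))) ≤ (goodset.card : ℝ) := by
    rcases Nat.eq_zero_or_pos m with hm0 | hm1
    · subst hm0
      have hMI : MI = ∅ := Finset.eq_empty_of_isEmpty MI
      have hNzero : N = 0 := by rw [hNsum, hMI]; simp
      have hgood_univ : goodset = Finset.univ := by
        rw [hgoodset]
        apply Finset.filter_true_of_mem
        intro σ _
        rw [hMI, hNzero]
        simp
      rw [hgood_univ, Finset.card_univ]
      have : (((0:ℕ) : ℝ)^3)⁻¹ = 0 := by norm_num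
      rw [this]
      simp
    · set badset := Finset.univ.filter (fun σ : Equiv.Perm (Fin m) =>
          2*ε*((N : ℕ) : ℝ) <
            ∑ i ∈ MI.filter (fun i => (σ i:ℕ) < S), ((ewt (edges i) : ℕ) : ℝ)) with hbadset
      have hbad := bad_count hW hm1 hε0 hε1 MI (fun i => ewt (edges i))
        (fun i hi => (hwbounds i hi).1) (fun i hi => (hwbounds i hi).2)
        (by rw [← hNsum]; exact_mod_cast hbig)
      rw [← hNsum, ← hSdef, ← hbadset] at hbad
      have hcompl : goodset.card + badset.card = m.factorial := by
        have hsplit := Finset.card_filter_add_card_filter_not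
          (s := (Finset.univ : Finset (Equiv.Perm (Fin m))))
          (p := fun σ : Equiv.Perm (Fin m) =>
            (∑ i ∈ MI.filter (fun i => (σ i : ℕ) < S), ((ewt (edges i) : ℕ) : ℝ)) ≤ 2 * ε * (N : ℝ))
        rw [Finset.card_univ, Fintype.card_perm, Fintype.card_fin] at hsplit
        have hneg : (Finset.univ.filter (fun σ : Equiv.Perm (Fin m) =>
            ¬ ((∑ i ∈ MI.filter (fun i => (σ i : ℕ) < S), ((ewt (edges i) : ℕ) : ℝ))
              ≤ 2 * ε * (N : ℝ)))) = badset := by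
          rw [hbadset]
          exact Finset.filter_congr (fun σ _ => not_le)
        rw [hneg] at hsplit
        rw [hgoodset]
        exact hsplit
      have hcomplR := congrArg (fun n : ℕ => (n:ℝ)) hcompl
      push_cast at hcomplR
      have hcards : (Fintype.card (Equiv.Perm (Fin m)) : ℝ) = (m.factorial : ℝ) := by
        rw [Fintype.card_perm, Fintype.card_fin]
      rw [hcards]
      have hm3 : (0:ℝ) < ((m:ℝ)^3)⁻¹ := by
        have : (0:ℝ) < (m:ℝ) := by exact_mod_cast hm1
        positivity
      nlinarith [hbad]
  refine ⟨key1, le_trans key1 ?_⟩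
  exact_mod_cast Finset.card_le_card hsub
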